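/- Let 𝒜 be a unital ℂ-algebra, E a finitely generated projective right 𝒜-module, and ℬ = End(E_𝒜). If δ ∈ Der(𝒜) is an inner derivation and the pair (δ', δ) ∈ Der(ℬ) × Der(𝒜) is compatible, then δ' is an inner derivation of ℬ. -/
import Mathlib


/-- **Lemma.** Let `𝒜` be a unital ℂ-algebra, `E` a finitely generated projective right
`𝒜`-module (a left `𝒜ᵐᵒᵖ`-module), and `ℬ = End(E_𝒜)`. If `δ` is an inner derivation of
`𝒜` and the pair `(δ', δ) ∈ Der(ℬ) × Der(𝒜)` is compatible — i.e. some ℂ-linear map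
`∇ : E → E` is simultaneously a connection for `(E_𝒜, δ)` and for `(_ℬE, δ')` — then
`δ'` is an inner derivation of `ℬ`. -/
theorem inner_of_compatible_inner
    (𝒜 : Type) [Ring 𝒜] [Algebra ℂ 𝒜]
    (E : Type) [AddCommGroup E] [Module 𝒜ᵐᵒᵖ E] [Module ℂ E]
    [SMulCommClass ℂ 𝒜ᵐᵒᵖ E] [SMulCommClass 𝒜ᵐᵒᵖ ℂ E]
    (hfin : Module.Finite 𝒜ᵐᵒᵖ E) (hproj : Module.Projective 𝒜ᵐᵒᵖ E)
    (δ : 𝒜 →ₗ[ℂ] 𝒜) (hδder : ∀ a b : 𝒜, δ (a * b) = δ a * b + a * δ b)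
    (hδinner : ∃ a₀ : 𝒜, ∀ a : 𝒜, δ a = a₀ * a - a * a₀)
    (δ' : Module.End 𝒜ᵐᵒᵖ E →ₗ[ℂ] Module.End 𝒜ᵐᵒᵖ E)
    (hδ'der : ∀ b₁ b₂ : Module.End 𝒜ᵐᵒᵖ E, δ' (b₁ * b₂) = δ' b₁ * b₂ + b₁ * δ' b₂)
    (hcompat : ∃ del : E →ₗ[ℂ] E,
      (∀ (f : E) (a : 𝒜),
        del (MulOpposite.op a • f) = MulOpposite.op a • del f + MulOpposite.op (δ a) • f) ∧
      (∀ (b : Module.End 𝒜ᵐᵒᵖ E) (f : E), del (b f) = b (del f) + (δ' b) f)) :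
    ∃ T : Module.End 𝒜ᵐᵒᵖ E, ∀ b : Module.End 𝒜ᵐᵒᵖ E, δ' b = T * b - b * T := by
  obtain ⟨a₀, ha₀⟩ := hδinner
  obtain ⟨del, hdel₁, hdel₂⟩ := hcompat
  refine ⟨{ toFun := fun f => del f + MulOpposite.op a₀ • f
            map_add' := fun f g => by simp [smul_add]; abel
            map_smul' := ?_ }, ?_⟩
  · rintro ⟨a⟩ f
    show del (MulOpposite.op a • f) + MulOpposite.op a₀ • MulOpposite.op a • f =
      MulOpposite.op a • (del f + MulOpposite.op a₀ • f)
    rw [hdel₁, ha₀, smul_add]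
    have h1 : MulOpposite.op a₀ • MulOpposite.op a • f =
        MulOpposite.op (a * a₀) • f := by
      rw [← mul_smul]; rfl
    have h2 : MulOpposite.op a • MulOpposite.op a₀ • f =
        MulOpposite.op (a₀ * a) • f := by
      rw [← mul_smul]; rfl
    rw [h1, h2]
    have : MulOpposite.op (a₀ * a - a * a₀) • f =
        MulOpposite.op (a₀ * a) • f - MulOpposite.op (a * a₀) • f := by
      rw [← sub_smul]; rfl
    rw [this]; abel
  · intro b
    ext f
    have := hdel₂ b f
    simp only [Module.End.mul_apply, LinearMap.sub_apply, LinearMap.coe_mk,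
      AddHom.coe_mk]
    show δ' b f = (del (b f) + MulOpposite.op a₀ • b f) - b (del f + MulOpposite.op a₀ • f)
    rw [this, map_add, map_smul]
    abel
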